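/- Let n_x, n_y be coprime positive integers and φ_x, φ_y real numbers such that n_y·φ_x − n_x·φ_y is not an integer multiple of π. Then the set of pairs (t₁, t₂) with 0 ≤ t₁ < t₂ < 2π, cos(n_x t₁ + φ_x) = cos(n_x t₂ + φ_x), and cos(n_y t₁ + φ_y) = cos(n_y t₂ + φ_y) is finite and has exactly 2·n_x·n_y − n_x − n_y elements. -/

import Mathlib

open Real

set_option maxHeartbeats 1000000

namespace Lissajous

/-- The point associated to index pair `(k, m)`. -/
noncomputable def F (n1 n2 : ℕ) (φ2 : ℝ) (q : ℤ × ℤ) : ℝ × ℝ :=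
  (π * q.2 / n2 - φ2 / n2 - π * q.1 / n1, π * q.2 / n2 - φ2 / n2 + π * q.1 / n1)

noncomputable def ca (n1 n2 : ℕ) (φ2 : ℝ) (k : ℤ) : ℤ :=
  ⌈(n2 : ℝ) * k / n1 + φ2 / π⌉

noncomputable def cb (n1 n2 : ℕ) (φ2 : ℝ) (k : ℤ) : ℤ :=
  ⌈2 * (n2 : ℝ) - (n2 : ℝ) * k / n1 + φ2 / π⌉

noncomputable def idx (n1 n2 : ℕ) (φ2 : ℝ) : Finset (ℤ × ℤ) :=
  (Finset.Ico (1 : ℤ) n1).biUnion fun k =>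
    (Finset.Ico (ca n1 n2 φ2 k) (cb n1 n2 φ2 k)).image (Prod.mk k)

def Bset (n1 n2 : ℕ) (φ2 : ℝ) : Set (ℝ × ℝ) :=
  {p | 0 ≤ p.1 ∧ p.1 < p.2 ∧ p.2 < 2 * π ∧
    (∃ k : ℤ, (n1 : ℝ) * (p.2 - p.1) = 2 * π * k) ∧
    (∃ m : ℤ, (n2 : ℝ) * (p.1 + p.2) + 2 * φ2 = 2 * π * m)}

lemma Bset_eq_image (n1 n2 : ℕ) (h1 : 0 < n1) (h2 : 0 < n2) (φ2 : ℝ) :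
    Bset n1 n2 φ2 = ↑((idx n1 n2 φ2).image (F n1 n2 φ2)) := by
  have hπ : (0:ℝ) < π := pi_pos
  have h1' : (0:ℝ) < n1 := by exact_mod_cast h1
  have h2' : (0:ℝ) < n2 := by exact_mod_cast h2
  ext p
  simp only [Bset, Set.mem_setOf_eq, Finset.coe_image, Set.mem_image, Finset.mem_coe,
    idx, Finset.mem_biUnion, Finset.mem_Ico, Finset.mem_image]
  constructor
  · rintro ⟨ht0, htlt, ht2, ⟨k, hk⟩, ⟨m, hm⟩⟩
    have hd : p.2 - p.1 = 2 * π * k / n1 := by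
      rw [eq_div_iff h1'.ne']; linarith [hk]
    have hs : p.1 + p.2 = (2 * π * m - 2 * φ2) / n2 := by
      rw [eq_div_iff h2'.ne']; linarith [hm]
    have hp1 : p.1 = π * m / n2 - φ2 / n2 - π * k / n1 := by
      have := hd; have := hs; field_simp at this ⊢; nlinarith [hd, hs]
    have hp2 : p.2 = π * m / n2 - φ2 / n2 + π * k / n1 := by
      have : p.2 = (p.1 + p.2) - p.1 := by ring
      rw [this, hs, hp1]; field_simp; ring
    have hk0 : (0:ℝ) < k := by nlinarith
    have hkn : (k:ℝ) < n1 := by nlinarith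
    refine ⟨(k, m), ⟨k, ⟨by exact_mod_cast hk0, by exact_mod_cast hkn⟩, ⟨m, ⟨?_, ?_⟩, rfl⟩⟩, ?_⟩
    · rw [ca, Int.ceil_le]
      have key : (π / n2) * ((m : ℝ) - ((n2:ℝ) * k / n1 + φ2 / π)) = p.1 := by
        rw [hp1]; field_simp; ring
      nlinarith [key, ht0, div_pos hπ h2']
    · rw [cb, Int.lt_ceil]
      have key : (π / n2) * ((2 * (n2 : ℝ) - (n2:ℝ) * k / n1 + φ2 / π) - m) = 2 * π - p.2 := by
        rw [hp2]; field_simp; ring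
      nlinarith [key, ht2, div_pos hπ h2']
    · rw [F]; exact Prod.ext hp1.symm hp2.symm
  · rintro ⟨⟨k, m⟩, ⟨k', ⟨hk1, hk2⟩, m', ⟨hm1, hm2⟩, heq⟩, rfl⟩
    obtain ⟨rfl, rfl⟩ : k = k' ∧ m = m' := by
      have h1 := congrArg Prod.fst heq
      have h2 := congrArg Prod.snd heq
      simp only [Prod.fst, Prod.snd] at h1 h2
      exact ⟨h1.symm, h2.symm⟩
    have hk1' : (1:ℝ) ≤ k := by exact_mod_cast hk1
    have hk2' : (k:ℝ) < n1 := by exact_mod_cast hk2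
    have hm1' : (n2:ℝ) * k / n1 + φ2 / π ≤ m := by
      rw [ca, Int.ceil_le] at hm1; exact hm1
    have hm2' : (m:ℝ) < 2 * (n2 : ℝ) - (n2:ℝ) * k / n1 + φ2 / π := by
      rw [cb, Int.lt_ceil] at hm2; exact hm2
    simp only [F]
    have key1 : (π / n2) * ((m : ℝ) - ((n2:ℝ) * k / n1 + φ2 / π))
        = π * m / n2 - φ2 / n2 - π * k / n1 := by
      field_simp [h1'.ne', h2'.ne', hπ.ne']; ring
    have key2 : (π / n2) * ((2 * (n2 : ℝ) - (n2:ℝ) * k / n1 + φ2 / π) - m)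
        = 2 * π - (π * m / n2 - φ2 / n2 + π * k / n1) := by
      field_simp [h1'.ne', h2'.ne', hπ.ne']; ring
    refine ⟨?_, ?_, ?_, ⟨k, ?_⟩, ⟨m, ?_⟩⟩
    · nlinarith [div_pos hπ h2']
    · have : (0:ℝ) < π * k / n1 := by positivity
      linarith
    · nlinarith [div_pos hπ h2']
    · field_simp [h1'.ne', h2'.ne']; ring
    · field_simp [h1'.ne', h2'.ne']; ring

lemma pair_sum (n1 n2 : ℕ) (h1 : 0 < n1) (φ2 : ℝ) (k : ℤ) :
    (cb n1 n2 φ2 k - ca n1 n2 φ2 k) + (cb n1 n2 φ2 ((n1:ℤ) - k) - ca n1 n2 φ2 ((n1:ℤ) - k))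
      = 2 * n2 := by
  have h1' : (0:ℝ) < n1 := by exact_mod_cast h1
  have e1 : 2 * (n2 : ℝ) - (n2 : ℝ) * k / n1 + φ2 / π
      = ((n2 : ℝ) * ((n1:ℤ) - k : ℤ) / n1 + φ2 / π) + (n2 : ℤ) := by
    push_cast
    field_simp
    ring
  have e2 : 2 * (n2 : ℝ) - (n2 : ℝ) * ((n1:ℤ) - k : ℤ) / n1 + φ2 / π
      = ((n2 : ℝ) * k / n1 + φ2 / π) + (n2 : ℤ) := by
    push_cast
    field_simp
    ring
  have c1 : cb n1 n2 φ2 k = ca n1 n2 φ2 ((n1:ℤ) - k) + (n2:ℤ) := by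
    rw [cb, ca, e1, Int.ceil_add_intCast]
  have c2 : cb n1 n2 φ2 ((n1:ℤ) - k) = ca n1 n2 φ2 k + (n2:ℤ) := by
    rw [cb, ca, e2, Int.ceil_add_intCast]
  rw [c1, c2]; ring

lemma term_nonneg (n1 n2 : ℕ) (h1 : 0 < n1) (φ2 : ℝ) (k : ℤ) (hk : k ≤ n1) :
    ca n1 n2 φ2 k ≤ cb n1 n2 φ2 k := by
  have h1' : (0:ℝ) < n1 := by exact_mod_cast h1
  apply Int.ceil_le_ceil
  have hk' : (k:ℝ) ≤ n1 := by exact_mod_cast hk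
  have : (n2 : ℝ) * k / n1 ≤ n2 := by
    rw [div_le_iff₀ h1']
    nlinarith [Nat.cast_nonneg (α := ℝ) n2]
  linarith

lemma idx_card (n1 n2 : ℕ) (h1 : 0 < n1) (φ2 : ℝ) :
    (idx n1 n2 φ2).card = n2 * (n1 - 1) := by
  rw [idx, Finset.card_biUnion]
  swap
  · intro x hx y hy hxy
    simp only [Finset.disjoint_left, Finset.mem_image]
    rintro a ⟨u, _, rfl⟩ ⟨v, _, hv⟩
    have h := congrArg Prod.fst hv
    simp only [Prod.fst] at h
    exact hxy h.symm
  have hcards : ∀ k ∈ Finset.Ico (1:ℤ) (n1:ℤ),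
      ((Finset.Ico (ca n1 n2 φ2 k) (cb n1 n2 φ2 k)).image (Prod.mk k)).card
        = (cb n1 n2 φ2 k - ca n1 n2 φ2 k).toNat := by
    intro k _
    rw [Finset.card_image_of_injective _ (fun a b h => by simpa using h), Int.card_Ico]
  rw [Finset.sum_congr rfl hcards]
  have key : ∑ k ∈ Finset.Ico (1:ℤ) (n1:ℤ), (cb n1 n2 φ2 k - ca n1 n2 φ2 k)
      = (n2 : ℤ) * ((n1:ℤ) - 1) := by
    set g : ℤ → ℤ := fun k => cb n1 n2 φ2 k - ca n1 n2 φ2 k with hg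
    have himg : (Finset.Ico (1:ℤ) (n1:ℤ)).image (fun k => (n1:ℤ) - k)
        = Finset.Ico (1:ℤ) (n1:ℤ) := by
      ext x
      simp only [Finset.mem_image, Finset.mem_Ico]
      constructor
      · rintro ⟨a, ⟨ha1, ha2⟩, rfl⟩; omega
      · rintro ⟨hx1, hx2⟩; exact ⟨(n1:ℤ) - x, ⟨by omega, by omega⟩, by omega⟩
    have hrefl : ∑ k ∈ Finset.Ico (1:ℤ) (n1:ℤ), g k
        = ∑ k ∈ Finset.Ico (1:ℤ) (n1:ℤ), g ((n1:ℤ) - k) := by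
      conv_lhs => rw [← himg]
      rw [Finset.sum_image (by intro a _ b _ h; have h' : (n1:ℤ) - a = (n1:ℤ) - b := h; omega)]
    have hdouble : 2 * ∑ k ∈ Finset.Ico (1:ℤ) (n1:ℤ), g k
        = ∑ k ∈ Finset.Ico (1:ℤ) (n1:ℤ), (g k + g ((n1:ℤ) - k)) := by
      rw [Finset.sum_add_distrib, ← hrefl]; ring
    have hconst : ∑ k ∈ Finset.Ico (1:ℤ) (n1:ℤ), (g k + g ((n1:ℤ) - k))
        = ∑ k ∈ Finset.Ico (1:ℤ) (n1:ℤ), (2 * (n2:ℤ)) := by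
      apply Finset.sum_congr rfl
      intro k _
      exact pair_sum n1 n2 h1 φ2 k
    have h1z : (1:ℤ) ≤ (n1:ℤ) := by exact_mod_cast h1
    rw [hconst, Finset.sum_const, Int.card_Ico, nsmul_eq_mul,
      Int.toNat_of_nonneg (by omega : (0:ℤ) ≤ (n1:ℤ) - 1)] at hdouble
    have hr : ((n1:ℤ) - 1) * (2 * (n2:ℤ)) = 2 * ((n2:ℤ) * ((n1:ℤ) - 1)) := by ring
    linarith
  have : ((∑ k ∈ Finset.Ico (1:ℤ) (n1:ℤ), (cb n1 n2 φ2 k - ca n1 n2 φ2 k).toNat : ℕ) : ℤ)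
      = ((n2 * (n1 - 1) : ℕ) : ℤ) := by
    push_cast
    rw [Finset.sum_congr rfl (fun k hk => Int.toNat_of_nonneg
      (by simp only [Finset.mem_Ico] at hk
          have := term_nonneg n1 n2 h1 φ2 k (by omega)
          omega))]
    rw [key]
    have : (1:ℤ) ≤ n1 := by exact_mod_cast h1
    push_cast [Nat.cast_sub h1]
    ring
  exact_mod_cast this

lemma F_inj (n1 n2 : ℕ) (h1 : 0 < n1) (h2 : 0 < n2) (φ2 : ℝ) :
    Function.Injective (F n1 n2 φ2) := by
  have hπ : (0:ℝ) < π := pi_pos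
  have h1' : (0:ℝ) < n1 := by exact_mod_cast h1
  have h2' : (0:ℝ) < n2 := by exact_mod_cast h2
  rintro ⟨k, m⟩ ⟨k', m'⟩ h
  have hfst := congrArg Prod.fst h
  have hsnd := congrArg Prod.snd h
  simp only [F] at hfst hsnd
  have hk : k = k' := by
    have h' : π * (k:ℝ) / n1 = π * (k':ℝ) / n1 := by linarith
    field_simp at h'
    exact_mod_cast h'
  subst hk
  have hm : m = m' := by
    have h' : π * (m:ℝ) / n2 = π * (m':ℝ) / n2 := by linarith
    field_simp at h'
    exact_mod_cast h'
  subst hm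
  rfl

lemma Bset_spec (n1 n2 : ℕ) (h1 : 0 < n1) (h2 : 0 < n2) (φ2 : ℝ) :
    (Bset n1 n2 φ2).Finite ∧ (Bset n1 n2 φ2).ncard = n2 * (n1 - 1) := by
  rw [Bset_eq_image n1 n2 h1 h2 φ2]
  refine ⟨Finset.finite_toSet _, ?_⟩
  rw [Set.ncard_coe_finset, Finset.card_image_of_injective _ (F_inj n1 n2 h1 h2 φ2),
    idx_card n1 n2 h1 φ2]

lemma elim_dd (nx ny : ℕ) (hnx : 0 < nx) (hny : 0 < ny) (hcop : Nat.Coprime nx ny)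
    (t : ℝ) (ht0 : 0 < t) (ht2 : t < 2 * π) (j l : ℤ)
    (hj : (nx:ℝ) * t = 2 * π * j) (hl : (ny:ℝ) * t = 2 * π * l) : False := by
  have hπ : (0:ℝ) < π := pi_pos
  have hnx' : (0:ℝ) < nx := by exact_mod_cast hnx
  have hny' : (0:ℝ) < ny := by exact_mod_cast hny
  have hj0 : 0 < j := by
    have : (0:ℝ) < j := by nlinarith
    exact_mod_cast this
  have hjn : j < nx := by
    have : (j:ℝ) < nx := by nlinarith
    exact_mod_cast this
  have hl0 : 0 < l := by
    have : (0:ℝ) < l := by nlinarith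
    exact_mod_cast this
  have hkey : (ny:ℤ) * j = (nx:ℤ) * l := by
    have h : 2 * π * ((ny:ℝ) * j) = 2 * π * ((nx:ℝ) * l) := by
      linear_combination (nx:ℝ) * hl - (ny:ℝ) * hj
    have h2 : ((ny:ℝ)) * j = (nx:ℝ) * l := by
      have h2π : (2 * π : ℝ) ≠ 0 := by positivity
      exact mul_left_cancel₀ h2π h
    exact_mod_cast h2
  lift j to ℕ using hj0.le with jn
  lift l to ℕ using hl0.le with ln
  have hkeyn : ny * jn = nx * ln := by exact_mod_cast hkey
  have hdvd : nx ∣ jn := (Nat.Coprime.dvd_of_dvd_mul_left hcop ⟨ln, hkeyn⟩)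
  have hjn0 : 0 < jn := by exact_mod_cast hj0
  have := Nat.le_of_dvd hjn0 hdvd
  have : jn < nx := by exact_mod_cast hjn
  omega

lemma elim_ss (nx ny : ℕ) (φx φy : ℝ)
    (hphase : ¬ ∃ l : ℤ, (ny : ℝ) * φx - (nx : ℝ) * φy = l * π)
    (u : ℝ) (j l : ℤ)
    (hj : (nx:ℝ) * u + 2 * φx = 2 * π * j) (hl : (ny:ℝ) * u + 2 * φy = 2 * π * l) : False := by
  apply hphase
  refine ⟨(ny:ℤ) * j - (nx:ℤ) * l, ?_⟩
  push_cast
  linear_combination ((ny:ℝ) / 2) * hj - ((nx:ℝ) / 2) * hl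

end Lissajous

open Lissajous in
/-- The `xy`-projection of a nondegenerate Lissajous curve with coprime
frequencies `nx`, `ny` has exactly `2·nx·ny − nx − ny` double points. -/
theorem lissajous_projection_crossing_count
    (nx ny : ℕ) (hnx : 0 < nx) (hny : 0 < ny) (hcop : Nat.Coprime nx ny)
    (φx φy : ℝ) (hphase : ¬ ∃ l : ℤ, (ny : ℝ) * φx - (nx : ℝ) * φy = l * π)
    (S : Set (ℝ × ℝ))
    (hS : S = {p : ℝ × ℝ | 0 ≤ p.1 ∧ p.1 < p.2 ∧ p.2 < 2 * π ∧
      Real.cos (nx * p.1 + φx) = Real.cos (nx * p.2 + φx) ∧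
      Real.cos (ny * p.1 + φy) = Real.cos (ny * p.2 + φy)}) :
    S.Finite ∧ S.ncard = 2 * nx * ny - nx - ny := by
  obtain ⟨hBfin, hBcard⟩ := Bset_spec nx ny hnx hny φy
  obtain ⟨hCfin, hCcard⟩ := Bset_spec ny nx hny hnx φx
  have hSeq : S = Bset nx ny φy ∪ Bset ny nx φx := by
    rw [hS]; ext p
    simp only [Set.mem_setOf_eq, Set.mem_union, Bset]
    constructor
    · rintro ⟨h0, hlt, h2, hcx, hcy⟩
      rw [Real.cos_eq_cos_iff] at hcx hcy
      obtain ⟨j, hj | hj⟩ := hcx <;> obtain ⟨l, hl | hl⟩ := hcy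
      · exact (elim_dd nx ny hnx hny hcop (p.2 - p.1)
          (by linarith) (by linarith) j l (by linear_combination hj)
          (by linear_combination hl)).elim
      · exact Or.inl ⟨h0, hlt, h2, ⟨j, by linear_combination hj⟩,
          ⟨l, by linear_combination hl⟩⟩
      · exact Or.inr ⟨h0, hlt, h2, ⟨l, by linear_combination hl⟩,
          ⟨j, by linear_combination hj⟩⟩
      · exact (elim_ss nx ny φx φy hphase (p.1 + p.2) j l
          (by linear_combination hj) (by linear_combination hl)).elim
    · rintro (⟨h0, hlt, h2, ⟨k, hk⟩, ⟨m, hm⟩⟩ | ⟨h0, hlt, h2, ⟨k, hk⟩, ⟨m, hm⟩⟩)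
      · refine ⟨h0, hlt, h2, ?_, ?_⟩
        · rw [Real.cos_eq_cos_iff]; exact ⟨k, Or.inl (by linear_combination hk)⟩
        · rw [Real.cos_eq_cos_iff]; exact ⟨m, Or.inr (by linear_combination hm)⟩
      · refine ⟨h0, hlt, h2, ?_, ?_⟩
        · rw [Real.cos_eq_cos_iff]; exact ⟨m, Or.inr (by linear_combination hm)⟩
        · rw [Real.cos_eq_cos_iff]; exact ⟨k, Or.inl (by linear_combination hk)⟩
  have hdisj : Disjoint (Bset nx ny φy) (Bset ny nx φx) := by
    rw [Set.disjoint_left]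
    rintro p ⟨h0, hlt, h2, ⟨k, hk⟩, -⟩ ⟨-, -, -, ⟨l, hl⟩, -⟩
    exact elim_dd nx ny hnx hny hcop (p.2 - p.1) (by linarith) (by linarith) k l hk hl
  constructor
  · rw [hSeq]; exact hBfin.union hCfin
  · rw [hSeq, Set.ncard_union_eq hdisj hBfin hCfin, hBcard, hCcard]
    obtain ⟨a, rfl⟩ : ∃ a, nx = a + 1 := ⟨nx - 1, by omega⟩
    obtain ⟨b, rfl⟩ : ∃ b, ny = b + 1 := ⟨ny - 1, by omega⟩
    simp only [Nat.add_sub_cancel]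
    rw [Nat.sub_sub]
    exact (Nat.sub_eq_of_eq_add (by ring)).symm
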